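/- For n≥1 and k≥2, the k-Pell graph Π(n,k) is a median graph: every triple of vertices x, y, z has a unique vertex lying simultaneously on some shortest x,y-path, some shortest x,z-path, and some shortest y,z-path. -/

import Mathlib

def isPellStr (k : ℕ) : List ℕ → Bool
  | [] => true
  | [a] => decide (a < k)
  | a :: b :: rest =>
    if a = k then (b == k) && isPellStr k rest
    else decide (a < k) && isPellStr k (b :: rest)

abbrev PellVert (n k : ℕ) := {f : Fin n → Fin (k + 1) // isPellStr k (List.ofFn fun i => (f i : ℕ)) = true}

def pellAdj (k : ℕ) {n : ℕ} (f g : Fin n → Fin (k + 1)) : Prop :=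
  (∃ j : Fin n, ((g j : ℕ) = (f j : ℕ) + 1) ∧ ((f j : ℕ) + 1 < k) ∧ ∀ i, i ≠ j → f i = g i) ∨
  (∃ j j' : Fin n, ((j' : ℕ) = (j : ℕ) + 1) ∧ ((f j : ℕ) = k - 1) ∧ ((f j' : ℕ) = k - 1) ∧
    ((g j : ℕ) = k) ∧ ((g j' : ℕ) = k) ∧ ∀ i, i ≠ j → i ≠ j' → f i = g i)

def kPellGraph (n k : ℕ) : SimpleGraph (PellVert n k) :=
  SimpleGraph.fromRel (fun u v => pellAdj k u.1 v.1)

namespace KPell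
lemma isPellStr_cons_cons (k a b : ℕ) (rest : List ℕ) :
    isPellStr k (a :: b :: rest) =
      if a = k then ((b == k) && isPellStr k rest)
      else (decide (a < k) && isPellStr k (b :: rest)) := rfl

def Cl (k : ℕ) (l : List ℕ) : Prop :=
  ∀ i ≤ l.length, Odd ((l.take i).count k) → (i < l.length ∧ l.getD i 0 = k)

lemma cl_nil (k : ℕ) : Cl k [] := by
  intro i hi
  simp at hi
  subst hi
  simp

lemma cl_cons_ne {k a : ℕ} {t : List ℕ} (ha : a ≠ k) : Cl k (a :: t) ↔ Cl k t := by
  constructor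
  · intro h i hi ho
    have := h (i+1) (by simpa using hi) (by
      simpa [List.count_cons, ha] using ho)
    simpa using this
  · intro h i hi ho
    match i with
    | 0 => simp at ho
    | (i+1) =>
      have := h i (by simpa using hi) (by simpa [List.count_cons, ha] using ho)
      simpa using this

lemma cl_kk {k : ℕ} {t : List ℕ} : Cl k (k :: k :: t) ↔ Cl k t := by
  constructor
  · intro h i hi ho
    have := h (i+2) (by simpa using hi) (by
      simp [List.count_cons]
      rcases ho with ⟨m, hm⟩
      exact ⟨m+1, by omega⟩)
    simpa using this
  · intro h i hi ho
    match i with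
    | 0 => simp at ho
    | 1 => simp
    | (i+2) =>
      have ho' : Odd ((t.take i).count k) := by
        simp [List.count_cons] at ho
        rcases ho with ⟨m, hm⟩
        exact ⟨m-1, by omega⟩
      have h2 := h i (by simpa using hi) ho'
      have h3 := h2.1
      refine ⟨by simp; omega, ?_⟩
      rw [List.getD_cons_succ, List.getD_cons_succ]
      exact h2.2

lemma cl_k_head {k b : ℕ} {t : List ℕ} (h : Cl k (k :: b :: t)) : b = k := by
  have := h 1 (by simp) (by simp)
  simpa using this.2

lemma not_cl_single {k : ℕ} : ¬ Cl k [k] := by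
  intro h
  have := (h 1 (by simp) (by simp)).1
  simp at this

lemma isPellStr_iff_cl (k : ℕ) :
    ∀ (l : List ℕ), (∀ a ∈ l, a ≤ k) → (isPellStr k l = true ↔ Cl k l) := by
  intro l
  induction l using isPellStr.induct k with
  | case1 => intro _; simp [isPellStr, cl_nil]
  | case2 a =>
    intro ha
    have ha' : a ≤ k := by simpa using ha
    simp only [isPellStr]
    constructor
    · intro h i hi ho
      have hlt : a < k := by simpa using h
      simp at hi
      interval_cases i
      · simp at ho
      · simp [List.count_cons, hlt.ne] at ho
    · intro h
      rcases eq_or_lt_of_le ha' with rfl | h2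
      · exact absurd h not_cl_single
      · simpa using h2
  | case3 b rest ih =>
    intro hmem
    have hrest : ∀ a ∈ rest, a ≤ k := fun a ha => hmem a (by simp [ha])
    rw [isPellStr_cons_cons, if_pos rfl]
    simp only [Bool.and_eq_true, beq_iff_eq]
    constructor
    · rintro ⟨rfl, h2⟩
      exact cl_kk.mpr ((ih hrest).mp h2)
    · intro h
      have hb := cl_k_head h
      subst hb
      exact ⟨rfl, (ih hrest).mpr (cl_kk.mp h)⟩
  | case4 a b rest ha ih =>
    intro hmem
    have ha' : a < k := lt_of_le_of_ne (hmem a (by simp)) ha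
    have hrest : ∀ x ∈ b :: rest, x ≤ k := fun x hx => hmem x (by simp at hx; rcases hx with h|h <;> simp [h])
    rw [isPellStr_cons_cons, if_neg ha]
    simp only [Bool.and_eq_true, decide_eq_true_iff]
    rw [ih hrest, cl_cons_ne ha]
    simp [ha']


section FinDefs

variable {n k : ℕ}

def fe (f : Fin n → Fin (k+1)) (i : ℕ) : ℕ := if h : i < n then (f ⟨i, h⟩ : ℕ) else 0

lemma fe_le (f : Fin n → Fin (k+1)) (i : ℕ) : fe f i ≤ k := by
  unfold fe
  split
  · exact Nat.lt_succ_iff.mp (Fin.is_lt _)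
  · exact Nat.zero_le _

lemma fe_out {f : Fin n → Fin (k+1)} {i : ℕ} (h : ¬ i < n) : fe f i = 0 := by
  simp [fe, h]

def cf (f : Fin n → Fin (k+1)) (i : ℕ) : ℕ :=
  ∑ j ∈ Finset.range i, if fe f j = k then 1 else 0

lemma cf_succ (f : Fin n → Fin (k+1)) (i : ℕ) :
    cf f (i+1) = cf f i + (if fe f i = k then 1 else 0) := Finset.sum_range_succ _ _

def Cf (f : Fin n → Fin (k+1)) : Prop :=
  ∀ i ≤ n, Odd (cf f i) → (i < n ∧ fe f i = k)

def sb (f : Fin n → Fin (k+1)) (i : ℕ) : Bool :=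
  decide (fe f i = k ∧ Odd (cf f (i+1)))

def wv (f : Fin n → Fin (k+1)) (i : ℕ) : ℕ := min (fe f i) (k-1)

def Dd (f g : Fin n → Fin (k+1)) : ℕ :=
  ∑ i ∈ Finset.range n, (Nat.dist (wv f i) (wv g i) + (if sb f i = sb g i then 0 else 1))

lemma count_take_eq {k : ℕ} (hk : k ≠ 0) :
    ∀ (l : List ℕ) (i : ℕ), (l.take i).count k = ∑ j ∈ Finset.range i, (if l.getD j 0 = k then 1 else 0) := by
  intro l
  induction l with
  | nil =>
    intro i
    have hg : ∀ j, ([] : List ℕ).getD j 0 = 0 := fun j => rfl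
    simp [hg, Ne.symm hk]
  | cons a t ih =>
    intro i
    match i with
    | 0 => simp
    | (i+1) =>
      rw [List.take_succ_cons, Finset.sum_range_succ']
      simp only [List.getD_cons_succ, List.getD_cons_zero, List.count_cons, ih i]
      by_cases h : a = k <;> simp [h]

lemma getD_ofFn (f : Fin n → Fin (k+1)) (i : ℕ) :
    (List.ofFn fun j => (f j : ℕ)).getD i 0 = fe f i := by
  rw [List.getD_eq_getElem?_getD, List.getElem?_ofFn]
  unfold fe
  split <;> simp_all

lemma valid_iff (hk : k ≠ 0) (f : Fin n → Fin (k+1)) :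
    isPellStr k (List.ofFn fun i => (f i : ℕ)) = true ↔ Cf f := by
  set l : List ℕ := List.ofFn fun i => (f i : ℕ) with hl
  have hlen : l.length = n := by simp [hl]
  have hmem : ∀ a ∈ l, a ≤ k := by
    intro a ha
    rw [hl, List.mem_ofFn] at ha
    rcases ha with ⟨j, rfl⟩
    exact Nat.lt_succ_iff.mp (Fin.is_lt _)
  rw [isPellStr_iff_cl k l hmem]
  unfold Cl Cf
  have hcnt : ∀ i, (l.take i).count k = cf f i := by
    intro i
    rw [count_take_eq hk l i]
    unfold cf
    refine Finset.sum_congr rfl fun j _ => ?_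
    rw [getD_ofFn]
  constructor
  · intro h i hi ho
    have := h i (hlen ▸ hi) (by rw [hcnt]; exact ho)
    rw [hlen] at this
    rw [getD_ofFn] at this
    exact this
  · intro h i hi ho
    rw [hlen] at hi
    rw [hcnt] at ho
    have := h i hi ho
    refine ⟨by rw [hlen]; exact this.1, ?_⟩
    rw [hl, getD_ofFn]
    exact this.2

lemma cf_stable {f : Fin n → Fin (k+1)} (hk : k ≠ 0) {i : ℕ} (h : n ≤ i) : cf f i = cf f n := by
  induction i with
  | zero =>
    have hn : n = 0 := by omega
    exact congrArg (cf f) hn.symm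
  | succ i ih =>
    rcases Nat.lt_or_ge n (i+1) with h2 | h2
    · have hn : n ≤ i := by omega
      rw [cf_succ, ih hn, fe_out (by omega)]
      simp [Ne.symm hk]
    · have hni : n = i + 1 := by omega
      exact congrArg (cf f) hni.symm

lemma even_cf {f : Fin n → Fin (k+1)} (hk : k ≠ 0) (hf : Cf f) (i : ℕ) (h : fe f i ≠ k) :
    ¬ Odd (cf f (i+1)) := by
  intro ho
  rcases Nat.lt_or_ge i n with hi | hi
  · rw [cf_succ] at ho
    simp [h] at ho
    exact h (hf i (le_of_lt hi) ho).2
  · rw [cf_stable hk (by omega)] at ho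
    exact absurd (hf n le_rfl ho).1 (lt_irrefl n)

lemma sb_true_spec {f : Fin n → Fin (k+1)} (hk : k ≠ 0) (hf : Cf f) {i : ℕ} (h : sb f i = true) :
    i + 1 < n ∧ fe f (i+1) = k ∧ sb f (i+1) = false := by
  rw [sb, decide_eq_true_eq] at h
  obtain ⟨hfk, ho⟩ := h
  have hin : i < n := by
    by_contra hc
    exact hk (by rw [← fe_out (f := f) hc, hfk])
  have h2 := hf (i+1) (by omega) ho
  refine ⟨h2.1, h2.2, ?_⟩
  rw [sb, decide_eq_false_iff_not]
  rintro ⟨-, ho2⟩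
  rw [cf_succ, if_pos h2.2] at ho2
  rcases ho with ⟨m, hm⟩
  rcases ho2 with ⟨m', hm'⟩
  omega

lemma sb_false_spec {f : Fin n → Fin (k+1)} (hk : k ≠ 0) (hf : Cf f) {i : ℕ}
    (hfk : fe f i = k) (h : sb f i = false) :
    0 < i ∧ fe f (i-1) = k ∧ sb f (i-1) = true := by
  rw [sb, decide_eq_false_iff_not] at h
  have ho : ¬ Odd (cf f (i+1)) := fun hc => h ⟨hfk, hc⟩
  rw [cf_succ, if_pos hfk] at ho
  have hoi : Odd (cf f i) := by
    rcases Nat.even_or_odd (cf f i) with he | hodd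
    · exact absurd (by rcases he with ⟨m, hm⟩; exact ⟨m, by omega⟩) ho
    · exact hodd
  have hi0 : 0 < i := by
    by_contra hc
    have : i = 0 := by omega
    rw [this] at hoi
    simp [cf] at hoi
  have hprev : fe f (i-1) = k := by
    by_contra hc
    have := even_cf hk hf (i-1) hc
    rw [Nat.sub_add_cancel hi0] at this
    exact this hoi
  refine ⟨hi0, hprev, ?_⟩
  rw [sb, decide_eq_true_eq]
  exact ⟨hprev, by rw [Nat.sub_add_cancel hi0]; exact hoi⟩

lemma wv_eq_of_ne {f : Fin n → Fin (k+1)} {i : ℕ} (h : fe f i ≠ k) : wv f i = fe f i := by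
  have := fe_le f i
  rw [wv]
  omega

lemma eq_of_wv_sb {f g : Fin n → Fin (k+1)} (hk : k ≠ 0) (hf : Cf f) (hg : Cf g)
    (hwv : ∀ i, wv f i = wv g i) (hsb : ∀ i, sb f i = sb g i) : f = g := by
  have key : ∀ i, fe f i = fe g i := by
    have main : ∀ (f g : Fin n → Fin (k+1)), Cf f → Cf g → (∀ i, wv f i = wv g i) →
        (∀ i, sb f i = sb g i) → ∀ i, fe f i = k → fe g i = k := by
      intro f g hf hg hwv hsb i hfk
      by_contra hgk
      rcases Bool.eq_false_or_eq_true (sb f i) with hb | hb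
      · have := (hsb i) ▸ hb
        rw [sb, decide_eq_true_eq] at this
        exact hgk this.1
      · obtain ⟨hi0, hprev, hstrue⟩ := sb_false_spec hk hf hfk hb
        have := sb_true_spec hk hg ((hsb (i-1)) ▸ hstrue)
        rw [Nat.sub_add_cancel hi0] at this
        exact hgk this.2.1
    intro i
    by_cases hfk : fe f i = k
    · rw [hfk, main f g hf hg hwv hsb i hfk]
    · by_cases hgk : fe g i = k
      · exact absurd (main g f hg hf (fun j => (hwv j).symm) (fun j => (hsb j).symm) i hgk) hfk
      · rw [← wv_eq_of_ne hfk, ← wv_eq_of_ne hgk, hwv]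
  funext j
  have := key j
  rw [fe, fe, dif_pos j.isLt, dif_pos j.isLt] at this
  exact Fin.ext (by simpa using this)

end FinDefs

section Moves

variable {n k : ℕ}

lemma sb_out {f : Fin n → Fin (k+1)} (hk : k ≠ 0) {i : ℕ} (h : ¬ i < n) : sb f i = false := by
  rw [sb, decide_eq_false_iff_not]
  rintro ⟨h1, -⟩
  rw [fe_out h] at h1
  exact hk h1.symm

lemma cf_congr {f g : Fin n → Fin (k+1)} (h : ∀ i, (fe f i = k ↔ fe g i = k)) (i : ℕ) :
    cf f i = cf g i := by
  refine Finset.sum_congr rfl fun j _ => ?_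
  by_cases hj : fe f j = k
  · rw [if_pos hj, if_pos ((h j).mp hj)]
  · rw [if_neg hj, if_neg (fun hc => hj ((h j).mpr hc))]

lemma sb_congr {f g : Fin n → Fin (k+1)} (h : ∀ i, (fe f i = k ↔ fe g i = k)) (i : ℕ) :
    sb f i = sb g i := by
  rw [sb, sb, decide_eq_decide, cf_congr h, h i]

lemma cf_congr_Cf {f g : Fin n → Fin (k+1)} (h : ∀ i, (fe f i = k ↔ fe g i = k)) (hf : Cf f) :
    Cf g := by
  intro i hi ho
  rw [← cf_congr h] at ho
  exact ⟨(hf i hi ho).1, (h i).mp (hf i hi ho).2⟩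

lemma cf_shift2 {f g : Fin n → Fin (k+1)} {j : ℕ}
    (hfj : fe f j ≠ k) (hfj1 : fe f (j+1) ≠ k) (hgj : fe g j = k) (hgj1 : fe g (j+1) = k)
    (hrest : ∀ i, i ≠ j → i ≠ j+1 → fe f i = fe g i) (i : ℕ) :
    cf g i = cf f i + ((if j < i then 1 else 0) + (if j + 1 < i then 1 else 0)) := by
  induction i with
  | zero => simp [cf]
  | succ i ih =>
    rw [cf_succ, cf_succ, ih]
    rcases eq_or_ne i j with rfl | h1
    · rw [if_pos hgj, if_neg hfj]
      split_ifs <;> omega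
    · rcases eq_or_ne i (j+1) with rfl | h2
      · rw [if_pos hgj1, if_neg hfj1]
        split_ifs <;> omega
      · rw [hrest i h1 h2]
        split_ifs <;> omega

lemma pair_up {f g : Fin n → Fin (k+1)} (hk : k ≠ 0) (hf : Cf f) {j : ℕ} (hj1 : j + 1 < n)
    (hfj : fe f j ≠ k) (hfj1 : fe f (j+1) ≠ k) (hgj : fe g j = k) (hgj1 : fe g (j+1) = k)
    (hrest : ∀ i, i ≠ j → i ≠ j+1 → fe f i = fe g i) :
    Cf g ∧ sb g j = true ∧ sb f j = false ∧ (∀ i, i ≠ j → sb f i = sb g i) := by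
  have hsh := cf_shift2 hfj hfj1 hgj hgj1 hrest
  have hev : ¬ Odd (cf f (j+1)) := even_cf hk hf j hfj
  rw [Nat.odd_iff] at hev
  have hev2 : cf f (j+2) % 2 = 0 := by
    rw [cf_succ, if_neg hfj1]
    omega
  have hCg : Cf g := by
    intro i hi ho
    rw [Nat.odd_iff] at ho
    rcases Nat.lt_or_ge j i with hji | hji
    · rcases Nat.lt_or_ge (j+1) i with hji2 | hji2
      · -- i ≥ j + 2
        have : cf g i = cf f i + 2 := by rw [hsh i, if_pos hji, if_pos hji2]
        have ho' : Odd (cf f i) := by rw [Nat.odd_iff]; omega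
        obtain ⟨h1, h2⟩ := hf i hi ho'
        exact ⟨h1, by rw [← hrest i (by omega) (by omega)]; exact h2⟩
      · -- i = j+1
        have hi' : i = j + 1 := by omega
        subst hi'
        exact ⟨hj1, hgj1⟩
    · -- i ≤ j
      have : cf g i = cf f i := by rw [hsh i, if_neg (by omega), if_neg (by omega)]; omega
      have ho' : Odd (cf f i) := by rw [Nat.odd_iff]; omega
      obtain ⟨h1, h2⟩ := hf i hi ho'
      have hij : i ≠ j := by
        rintro rfl
        exact hfj h2
      exact ⟨h1, by rw [← hrest i hij (by omega)]; exact h2⟩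
  have hsgj : sb g j = true := by
    rw [sb, decide_eq_true_eq]
    refine ⟨hgj, ?_⟩
    have : cf g (j+1) = cf f (j+1) + 1 := by rw [hsh (j+1), if_pos (by omega), if_neg (by omega)]
    rw [Nat.odd_iff]
    omega
  have hsfj : sb f j = false := by
    rw [sb, decide_eq_false_iff_not]
    rintro ⟨h1, -⟩
    exact hfj h1
  refine ⟨hCg, hsgj, hsfj, fun i hij => ?_⟩
  rcases Nat.lt_or_ge j i with hji | hji
  · rcases Nat.lt_or_ge (j+1) i with hji2 | hji2
    · -- i ≥ j+2
      rw [sb, sb, decide_eq_decide, hrest i (by omega) (by omega)]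
      have : cf g (i+1) = cf f (i+1) + 2 := by rw [hsh (i+1), if_pos (by omega), if_pos (by omega)]
      rw [this, Nat.odd_iff, Nat.odd_iff]
      constructor
      · rintro ⟨h1, h2⟩; exact ⟨h1, by omega⟩
      · rintro ⟨h1, h2⟩; exact ⟨h1, by omega⟩
    · -- i = j + 1
      have hi' : i = j + 1 := by omega
      subst hi'
      have h1 : sb f (j+1) = false := by
        rw [sb, decide_eq_false_iff_not]
        rintro ⟨h1, -⟩
        exact hfj1 h1
      have h2 : sb g (j+1) = false := by
        rw [sb, decide_eq_false_iff_not]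
        rintro ⟨-, h2⟩
        have : cf g (j+2) = cf f (j+2) + 2 := by rw [hsh (j+2), if_pos (by omega), if_pos (by omega)]
        rw [this, Nat.odd_iff] at h2
        omega
      rw [h1, h2]
  · -- i < j
    rw [sb, sb, decide_eq_decide, hrest i (by omega) (by omega)]
    have : cf g (i+1) = cf f (i+1) := by rw [hsh (i+1), if_neg (by omega), if_neg (by omega)]; omega
    rw [this]

lemma pair_down {f g : Fin n → Fin (k+1)} (hk : k ≠ 0) (hf : Cf f) {j : ℕ}
    (hfj : fe f j = k) (hfj1 : fe f (j+1) = k) (hsbj : sb f j = true)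
    (hgj : fe g j ≠ k) (hgj1 : fe g (j+1) ≠ k)
    (hrest : ∀ i, i ≠ j → i ≠ j+1 → fe f i = fe g i) :
    Cf g ∧ sb g j = false ∧ (∀ i, i ≠ j → sb f i = sb g i) := by
  have hsh := cf_shift2 hgj hgj1 hfj hfj1 (fun i h1 h2 => (hrest i h1 h2).symm)
  have hoj : Odd (cf f (j+1)) := by
    rw [sb, decide_eq_true_eq] at hsbj
    exact hsbj.2
  rw [Nat.odd_iff] at hoj
  have hcfj : cf f (j+1) = cf f j + 1 := by rw [cf_succ, if_pos hfj]
  have hgev : cf g j % 2 = 0 := by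
    have : cf f j = cf g j := by rw [hsh j, if_neg (by omega), if_neg (by omega)]; omega
    omega
  have hgj1c : cf g (j+1) = cf g j := by rw [cf_succ, if_neg hgj]; omega
  have hspec := sb_true_spec hk hf hsbj
  have hCg : Cf g := by
    intro i hi ho
    rw [Nat.odd_iff] at ho
    rcases Nat.lt_or_ge j i with hji | hji
    · rcases Nat.lt_or_ge (j+1) i with hji2 | hji2
      · have : cf f i = cf g i + 2 := by rw [hsh i, if_pos hji, if_pos hji2]
        have ho' : Odd (cf f i) := by rw [Nat.odd_iff]; omega
        obtain ⟨h1, h2⟩ := hf i hi ho'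
        exact ⟨h1, by rw [← hrest i (by omega) (by omega)]; exact h2⟩
      · have hi' : i = j + 1 := by omega
        subst hi'
        omega
    · have hij : i ≤ j := hji
      rcases eq_or_ne i j with rfl | hne
      · omega
      · have : cf f i = cf g i := by rw [hsh i, if_neg (by omega), if_neg (by omega)]; omega
        have ho' : Odd (cf f i) := by rw [Nat.odd_iff]; omega
        obtain ⟨h1, h2⟩ := hf i hi ho'
        exact ⟨h1, by rw [← hrest i hne (by omega)]; exact h2⟩
  have hsgj : sb g j = false := by
    rw [sb, decide_eq_false_iff_not]
    rintro ⟨h1, -⟩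
    exact hgj h1
  refine ⟨hCg, hsgj, fun i hij => ?_⟩
  rcases Nat.lt_or_ge j i with hji | hji
  · rcases Nat.lt_or_ge (j+1) i with hji2 | hji2
    · rw [sb, sb, decide_eq_decide, hrest i (by omega) (by omega)]
      have : cf f (i+1) = cf g (i+1) + 2 := by rw [hsh (i+1), if_pos (by omega), if_pos (by omega)]
      rw [this, Nat.odd_iff, Nat.odd_iff]
      constructor
      · rintro ⟨h1, h2⟩; exact ⟨h1, by omega⟩
      · rintro ⟨h1, h2⟩; exact ⟨h1, by omega⟩
    · have hi' : i = j + 1 := by omega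
      subst hi'
      have h2 : sb g (j+1) = false := by
        rw [sb, decide_eq_false_iff_not]
        rintro ⟨h2, -⟩
        exact hgj1 h2
      rw [hspec.2.2, h2]
  · rw [sb, sb, decide_eq_decide, hrest i (by omega) (by omega)]
    have : cf f (i+1) = cf g (i+1) := by rw [hsh (i+1), if_neg (by omega), if_neg (by omega)]; omega
    rw [this]

lemma Dd_comm (f g : Fin n → Fin (k+1)) : Dd f g = Dd g f := by
  refine Finset.sum_congr rfl fun i _ => ?_
  rw [Nat.dist_comm]
  congr 1
  by_cases h : sb f i = sb g i
  · rw [if_pos h, if_pos h.symm]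
  · rw [if_neg h, if_neg (fun hc => h hc.symm)]

lemma Dd_triangle (f g h : Fin n → Fin (k+1)) : Dd f h ≤ Dd f g + Dd g h := by
  rw [Dd, Dd, Dd, ← Finset.sum_add_distrib]
  refine Finset.sum_le_sum fun i _ => ?_
  have h1 := Nat.dist.triangle_inequality (wv f i) (wv g i) (wv h i)
  have h2 : (if sb f i = sb h i then 0 else 1) ≤
      (if sb f i = sb g i then 0 else 1) + ((if sb g i = sb h i then 0 else 1) : ℕ) := by
    by_cases hfh : sb f i = sb h i
    · rw [if_pos hfh]; omega
    · have hor : ¬(sb f i = sb g i) ∨ ¬(sb g i = sb h i) := by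
        by_contra hc
        push_neg at hc
        exact hfh (hc.1.trans hc.2)
      rw [if_neg hfh]
      rcases hor with h' | h'
      · rw [if_neg h']; omega
      · rw [if_neg h']; omega
  omega

lemma Dd_eq_zero {f g : Fin n → Fin (k+1)} (hk : k ≠ 0) (hf : Cf f) (hg : Cf g)
    (h : Dd f g = 0) : f = g := by
  rw [Dd, Finset.sum_eq_zero_iff] at h
  refine eq_of_wv_sb hk hf hg (fun i => ?_) (fun i => ?_)
  · by_cases hi : i < n
    · have := h i (Finset.mem_range.mpr hi)
      have hd : Nat.dist (wv f i) (wv g i) = 0 := by omega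
      exact Nat.eq_of_dist_eq_zero hd
    · rw [wv, wv, fe_out hi, fe_out hi]
  · by_cases hi : i < n
    · have := h i (Finset.mem_range.mpr hi)
      by_contra hc
      rw [if_neg hc] at this
      omega
    · rw [sb_out hk hi, sb_out hk hi]

end Moves

section Graph

variable {n k : ℕ}

lemma fin_val (f : Fin n → Fin (k+1)) {i : ℕ} (h : i < n) :
    ((f ⟨i, h⟩ : Fin (k+1)) : ℕ) = fe f i := by
  rw [fe, dif_pos h]

lemma fe_fin (f : Fin n → Fin (k+1)) (j : Fin n) : fe f (j : ℕ) = (f j : ℕ) := by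
  simp [fe]

lemma fe_ite1 {x : Fin n → Fin (k+1)} {c : Fin (k+1)} {i : ℕ} (m : ℕ) :
    fe (fun t => if (t : ℕ) = i then c else x t) m =
      if m = i ∧ m < n then (c : ℕ) else fe x m := by
  by_cases hm : m < n
  · by_cases hc : m = i
    · have h2 : (if ((⟨m, hm⟩ : Fin n) : ℕ) = i then c else x ⟨m, hm⟩) = c := if_pos hc
      rw [fe, dif_pos hm, h2, if_pos ⟨hc, hm⟩]
    · have h2 : (if ((⟨m, hm⟩ : Fin n) : ℕ) = i then c else x ⟨m, hm⟩) = x ⟨m, hm⟩ := if_neg hc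
      rw [fe, fe, dif_pos hm, dif_pos hm, h2, if_neg (by tauto)]
  · rw [if_neg (fun h => hm h.2), fe_out hm, fe_out hm]

lemma fe_ite2 {x : Fin n → Fin (k+1)} {c : Fin (k+1)} {i : ℕ} (m : ℕ) :
    fe (fun t => if (t : ℕ) = i ∨ (t : ℕ) = i + 1 then c else x t) m =
      if (m = i ∨ m = i + 1) ∧ m < n then (c : ℕ) else fe x m := by
  by_cases hm : m < n
  · by_cases hc : m = i ∨ m = i + 1
    · have h2 : (if ((⟨m, hm⟩ : Fin n) : ℕ) = i ∨ ((⟨m, hm⟩ : Fin n) : ℕ) = i + 1 then c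
          else x ⟨m, hm⟩) = c := if_pos hc
      rw [fe, dif_pos hm, h2, if_pos ⟨hc, hm⟩]
    · have h2 : (if ((⟨m, hm⟩ : Fin n) : ℕ) = i ∨ ((⟨m, hm⟩ : Fin n) : ℕ) = i + 1 then c
          else x ⟨m, hm⟩) = x ⟨m, hm⟩ := if_neg hc
      rw [fe, fe, dif_pos hm, dif_pos hm, h2, if_neg (by tauto)]
  · rw [if_neg (fun h => hm h.2), fe_out hm, fe_out hm]

lemma wv_congr {f g : Fin n → Fin (k+1)} {m : ℕ} (h : fe f m = fe g m) : wv f m = wv g m := by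
  rw [wv, wv, h]

lemma pellAdj_Dd {f g : Fin n → Fin (k+1)} (hk : k ≠ 0) (hCf : Cf f)
    (h : pellAdj k f g) : Dd f g = 1 := by
  rcases h with ⟨j, hgj, hlt, hrest⟩ | ⟨j, j', hj', hfj, hfj1, hgj, hgj1, hrest⟩
  · -- single move
    have hfe_rest : ∀ m, m ≠ (j : ℕ) → fe f m = fe g m := by
      intro m hm
      by_cases h2 : m < n
      · rw [fe, fe, dif_pos h2, dif_pos h2, hrest ⟨m, h2⟩ (fun hc => hm (by rw [← hc]))]
      · rw [fe_out h2, fe_out h2]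
    have hfjv : fe f (j : ℕ) = (f j : ℕ) := fe_fin f j
    have hgjv : fe g (j : ℕ) = (f j : ℕ) + 1 := by rw [fe_fin g j, hgj]
    have keq : ∀ m, fe f m = k ↔ fe g m = k := by
      intro m
      by_cases hm : m = (j : ℕ)
      · subst hm
        rw [hfjv, hgjv]
        omega
      · rw [hfe_rest m hm]
    have hsbeq := sb_congr keq
    rw [Dd, Finset.sum_eq_single_of_mem (j : ℕ) (Finset.mem_range.mpr j.isLt)]
    · rw [if_pos (hsbeq (j : ℕ)), wv, wv, hfjv, hgjv, Nat.dist]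
      have hlt' : (f j : ℕ) + 1 < k := hlt
      have h1 : min ((f j : ℕ)) (k-1) = (f j : ℕ) := by omega
      have h2 : min ((f j : ℕ) + 1) (k-1) = (f j : ℕ) + 1 := by omega
      rw [h1, h2]
      omega
    · intro b _ hb
      rw [if_pos (hsbeq b), wv_congr (hfe_rest b hb), Nat.dist_self]
      omega
  · -- pair move
    have hj1 : (j : ℕ) + 1 < n := by rw [← hj']; exact j'.isLt
    have hfvj : fe f (j : ℕ) = k - 1 := by rw [fe_fin]; exact hfj
    have hfvj1 : fe f ((j : ℕ) + 1) = k - 1 := by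
      rw [← hj', fe_fin]; exact hfj1
    have hgvj : fe g (j : ℕ) = k := by rw [fe_fin]; exact hgj
    have hgvj1 : fe g ((j : ℕ) + 1) = k := by rw [← hj', fe_fin]; exact hgj1
    have hfe_rest : ∀ m, m ≠ (j : ℕ) → m ≠ (j : ℕ) + 1 → fe f m = fe g m := by
      intro m hm1 hm2
      by_cases h2 : m < n
      · rw [fe, fe, dif_pos h2, dif_pos h2,
          hrest ⟨m, h2⟩ (fun hc => hm1 (by rw [← hc])) (fun hc => hm2 (by rw [← hj', ← hc]))]
      · rw [fe_out h2, fe_out h2]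
    have hne1 : fe f (j : ℕ) ≠ k := by omega
    have hne2 : fe f ((j : ℕ) + 1) ≠ k := by omega
    obtain ⟨hCg, hsgj, hsfj, hsb_rest⟩ := pair_up hk hCf hj1 hne1 hne2 hgvj hgvj1 hfe_rest
    have hwv : ∀ m, wv f m = wv g m := by
      intro m
      by_cases hm1 : m = (j : ℕ)
      · subst hm1; rw [wv, wv, hfvj, hgvj]; omega
      · by_cases hm2 : m = (j : ℕ) + 1
        · subst hm2; rw [wv, wv, hfvj1, hgvj1]; omega
        · exact wv_congr (hfe_rest m hm1 hm2)
    rw [Dd, Finset.sum_eq_single_of_mem (j : ℕ) (Finset.mem_range.mpr (by omega))]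
    · rw [hwv (j : ℕ), Nat.dist_self, if_neg (by rw [hsgj, hsfj]; simp)]
    · intro b _ hb
      rw [if_pos (hsb_rest b hb), hwv b, Nat.dist_self]
      omega

lemma valid_Cf (hk : k ≠ 0) (u : PellVert n k) : Cf u.1 := (valid_iff hk u.1).mp u.2

lemma adj_Dd {u v : PellVert n k} (hk : k ≠ 0) (h : (kPellGraph n k).Adj u v) :
    Dd u.1 v.1 = 1 := by
  rw [kPellGraph, SimpleGraph.fromRel_adj] at h
  rcases h.2 with h2 | h2
  · exact pellAdj_Dd hk (valid_Cf hk u) h2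
  · rw [Dd_comm]; exact pellAdj_Dd hk (valid_Cf hk v) h2

lemma Dd_self (f : Fin n → Fin (k+1)) : Dd f f = 0 := by
  rw [Dd]
  refine Finset.sum_eq_zero fun i _ => ?_
  simp [Nat.dist_self]

lemma Dd_le_walk (hk : k ≠ 0) {u v : PellVert n k} (p : (kPellGraph n k).Walk u v) :
    Dd u.1 v.1 ≤ p.length := by
  induction p with
  | nil => simp [Dd_self]
  | @cons a b c h' p' ih =>
    calc Dd a.1 c.1 ≤ Dd a.1 b.1 + Dd b.1 c.1 := Dd_triangle _ _ _
    _ ≤ 1 + p'.length := by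
        rw [adj_Dd hk h']
        omega
    _ = (SimpleGraph.Walk.cons h' p').length := by rw [SimpleGraph.Walk.length_cons]; omega

lemma Dd_decrease_s {f f' g : Fin n → Fin (k+1)} {i : ℕ} (hin : i < n)
    (hwv : ∀ m, wv f' m = wv f m) (hsb : ∀ m, m ≠ i → sb f' m = sb f m)
    (hold : ¬ (sb f i = sb g i)) (hnew : sb f' i = sb g i) :
    Dd f' g + 1 = Dd f g := by
  have hcong : ∑ m ∈ (Finset.range n).erase i,
      (Nat.dist (wv f' m) (wv g m) + (if sb f' m = sb g m then 0 else 1)) =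
      ∑ m ∈ (Finset.range n).erase i,
      (Nat.dist (wv f m) (wv g m) + (if sb f m = sb g m then 0 else 1)) :=
    Finset.sum_congr rfl (fun m hm => by rw [hwv m, hsb m (Finset.ne_of_mem_erase hm)])
  rw [Dd, Dd, ← Finset.sum_erase_add _ _ (Finset.mem_range.mpr hin),
    ← Finset.sum_erase_add _ _ (Finset.mem_range.mpr hin), hcong,
    hwv i, if_pos hnew, if_neg hold]
  omega

lemma Dd_decrease_w {f f' g : Fin n → Fin (k+1)} {i : ℕ} (hin : i < n)
    (hsb : ∀ m, sb f' m = sb f m) (hwv : ∀ m, m ≠ i → wv f' m = wv f m)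
    (hd : Nat.dist (wv f' i) (wv g i) + 1 = Nat.dist (wv f i) (wv g i)) :
    Dd f' g + 1 = Dd f g := by
  have hcong : ∑ m ∈ (Finset.range n).erase i,
      (Nat.dist (wv f' m) (wv g m) + (if sb f' m = sb g m then 0 else 1)) =
      ∑ m ∈ (Finset.range n).erase i,
      (Nat.dist (wv f m) (wv g m) + (if sb f m = sb g m then 0 else 1)) :=
    Finset.sum_congr rfl (fun m hm => by rw [hwv m (Finset.ne_of_mem_erase hm), hsb m])
  rw [Dd, Dd, ← Finset.sum_erase_add _ _ (Finset.mem_range.mpr hin),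
    ← Finset.sum_erase_add _ _ (Finset.mem_range.mpr hin), hcong, hsb i]
  omega

lemma exists_adj_step (hk : k ≠ 0) {x y : PellVert n k} (hne : Dd x.1 y.1 ≠ 0) :
    ∃ x' : PellVert n k, (kPellGraph n k).Adj x x' ∧ Dd x'.1 y.1 + 1 = Dd x.1 y.1 := by
  have hCf := valid_Cf hk x
  have hCg := valid_Cf hk y
  by_cases hA : ∃ i, sb x.1 i = true ∧ sb y.1 i = false
  · -- Case A : remove a pair of k's from x
    obtain ⟨i, hsf, hsg⟩ := hA
    have hfik : fe x.1 i = k := by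
      rw [sb, decide_eq_true_eq] at hsf
      exact hsf.1
    obtain ⟨hi1, hfik1, hsf1⟩ := sb_true_spec hk hCf hsf
    set f' : Fin n → Fin (k+1) :=
      (fun t => if (t : ℕ) = i ∨ (t : ℕ) = i + 1 then ⟨k-1, by omega⟩ else x.1 t) with hf'
    have hin : i < n := by omega
    have hfe1 : fe f' i = k - 1 := by rw [hf', fe_ite2, if_pos ⟨Or.inl rfl, hin⟩]
    have hfe2 : fe f' (i+1) = k - 1 := by rw [hf', fe_ite2, if_pos ⟨Or.inr rfl, hi1⟩]
    have hfer : ∀ m, m ≠ i → m ≠ i + 1 → fe x.1 m = fe f' m := by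
      intro m h1 h2
      rw [hf', fe_ite2, if_neg (by tauto)]
    have hk1 : k - 1 ≠ k := by omega
    obtain ⟨hCf', hsf'j, hrest'⟩ :=
      pair_down hk hCf hfik hfik1 hsf (by rw [hfe1]; exact hk1) (by rw [hfe2]; exact hk1) hfer
    have hwv : ∀ m, wv f' m = wv x.1 m := by
      intro m
      by_cases h1 : m = i
      · subst h1; rw [wv, wv, hfe1, hfik]; omega
      · by_cases h2 : m = i + 1
        · subst h2; rw [wv, wv, hfe2, hfik1]; omega
        · exact wv_congr (hfer m h1 h2).symm
    have hadj : pellAdj k f' x.1 := by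
      right
      refine ⟨⟨i, hin⟩, ⟨i+1, hi1⟩, rfl, ?_, ?_, ?_, ?_, ?_⟩
      · rw [fin_val f' hin]; exact hfe1
      · rw [fin_val f' hi1]; exact hfe2
      · rw [fin_val x.1 hin]; exact hfik
      · rw [fin_val x.1 hi1]; exact hfik1
      · intro t ht1 ht2
        simp only [hf']
        rw [if_neg]
        rintro (hc | hc)
        · exact ht1 (Fin.ext (by simpa using hc))
        · exact ht2 (Fin.ext (by simpa using hc))
    have hnefun : x.1 ≠ f' := by
      intro hc
      have : fe x.1 i = fe f' i := by rw [hc]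
      omega
    refine ⟨⟨f', (valid_iff hk f').mpr hCf'⟩, ?_, ?_⟩
    · rw [kPellGraph, SimpleGraph.fromRel_adj]
      exact ⟨fun hc => hnefun (congrArg Subtype.val hc), Or.inr hadj⟩
    · exact Dd_decrease_s hin hwv (fun m hm => (hrest' m hm).symm)
        (by rw [hsf, hsg]; simp) (by rw [hsf'j, hsg])
  · push_neg at hA
    replace hA : ∀ i, sb x.1 i = true → sb y.1 i = true := by
      intro i h1
      have h2 := hA i h1
      cases h3 : sb y.1 i with
      | false => exact absurd h3 h2
      | true => rfl
    by_cases hB : ∃ i, wv y.1 i < wv x.1 i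
    · -- Case B : decrease a letter of x
      obtain ⟨i, hilt⟩ := hB
      have hin : i < n := by
        by_contra hc
        rw [wv, wv, fe_out hc, fe_out hc] at hilt
        omega
      have hwxle : wv x.1 i ≤ k - 1 := min_le_right _ _
      have hfik : fe x.1 i ≠ k := by
        intro hfe
        have hcon : fe y.1 i = k → False := by
          intro hgk
          have : wv y.1 i = k - 1 := by rw [wv, hgk]; omega
          omega
        cases hb : sb x.1 i with
        | false =>
          obtain ⟨hi0, hprev, hstrue⟩ := sb_false_spec hk hCf hfe hb
          have hy := sb_true_spec hk hCg (hA _ hstrue)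
          rw [Nat.sub_add_cancel hi0] at hy
          exact hcon hy.2.1
        | true =>
          have hy := hA i hb
          rw [sb, decide_eq_true_eq] at hy
          exact hcon hy.1
      have hwx : wv x.1 i = fe x.1 i := wv_eq_of_ne hfik
      have hge1 : 1 ≤ fe x.1 i := by omega
      have hlek : fe x.1 i ≤ k := fe_le _ _
      set f' : Fin n → Fin (k+1) :=
        (fun t => if (t : ℕ) = i then ⟨fe x.1 i - 1, by omega⟩ else x.1 t) with hf'
      have hfe1 : fe f' i = fe x.1 i - 1 := by rw [hf', fe_ite1, if_pos ⟨rfl, hin⟩]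
      have hfer : ∀ m, m ≠ i → fe x.1 m = fe f' m := by
        intro m h1
        rw [hf', fe_ite1, if_neg (by tauto)]
      have keq : ∀ m, fe x.1 m = k ↔ fe f' m = k := by
        intro m
        by_cases h1 : m = i
        · subst h1
          rw [hfe1]
          omega
        · rw [hfer m h1]
      have hCf' : Cf f' := cf_congr_Cf keq hCf
      have hsbeq := sb_congr keq
      have hadj : pellAdj k f' x.1 := by
        left
        refine ⟨⟨i, hin⟩, ?_, ?_, ?_⟩
        · rw [fin_val x.1 hin, fin_val f' hin, hfe1]
          omega
        · rw [fin_val f' hin, hfe1]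
          omega
        · intro t ht
          simp only [hf']
          rw [if_neg (fun hc => ht (Fin.ext (by simpa using hc)))]
      have hnefun : x.1 ≠ f' := by
        intro hc
        have : fe x.1 i = fe f' i := by rw [hc]
        omega
      refine ⟨⟨f', (valid_iff hk f').mpr hCf'⟩, ?_, ?_⟩
      · rw [kPellGraph, SimpleGraph.fromRel_adj]
        exact ⟨fun hc => hnefun (congrArg Subtype.val hc), Or.inr hadj⟩
      · refine Dd_decrease_w hin (fun m => (hsbeq m).symm)
          (fun m hm => wv_congr (hfer m hm).symm) ?_
        have hwf' : wv f' i = fe x.1 i - 1 := by rw [wv, hfe1]; omega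
        rw [hwf', hwx, Nat.dist, Nat.dist]
        omega
    · push_neg at hB
      by_cases hC : ∃ i, wv x.1 i < wv y.1 i
      · -- Case C : increase a letter of x
        obtain ⟨i, hilt⟩ := hC
        have hin : i < n := by
          by_contra hc
          rw [wv, wv, fe_out hc, fe_out hc] at hilt
          omega
        have hwyle : wv y.1 i ≤ k - 1 := min_le_right _ _
        have hfik : fe x.1 i < k - 1 := by
          have := min_le_left (fe x.1 i) (k-1)
          rw [wv] at hilt
          omega
        have hwx : wv x.1 i = fe x.1 i := by rw [wv]; omega
        set f' : Fin n → Fin (k+1) :=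
          (fun t => if (t : ℕ) = i then ⟨fe x.1 i + 1, by omega⟩ else x.1 t) with hf'
        have hfe1 : fe f' i = fe x.1 i + 1 := by rw [hf', fe_ite1, if_pos ⟨rfl, hin⟩]
        have hfer : ∀ m, m ≠ i → fe x.1 m = fe f' m := by
          intro m h1
          rw [hf', fe_ite1, if_neg (by tauto)]
        have keq : ∀ m, fe x.1 m = k ↔ fe f' m = k := by
          intro m
          by_cases h1 : m = i
          · subst h1
            rw [hfe1]
            omega
          · rw [hfer m h1]
        have hCf' : Cf f' := cf_congr_Cf keq hCf
        have hsbeq := sb_congr keq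
        have hadj : pellAdj k x.1 f' := by
          left
          refine ⟨⟨i, hin⟩, ?_, ?_, ?_⟩
          · rw [fin_val x.1 hin, fin_val f' hin, hfe1]
          · rw [fin_val x.1 hin]
            omega
          · intro t ht
            simp only [hf']
            rw [if_neg (fun hc => ht (Fin.ext (by simpa using hc)))]
        have hnefun : x.1 ≠ f' := by
          intro hc
          have : fe x.1 i = fe f' i := by rw [hc]
          omega
        refine ⟨⟨f', (valid_iff hk f').mpr hCf'⟩, ?_, ?_⟩
        · rw [kPellGraph, SimpleGraph.fromRel_adj]
          exact ⟨fun hc => hnefun (congrArg Subtype.val hc), Or.inl hadj⟩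
        · refine Dd_decrease_w hin (fun m => (hsbeq m).symm)
            (fun m hm => wv_congr (hfer m hm).symm) ?_
          have hwf' : wv f' i = fe x.1 i + 1 := by rw [wv, hfe1]; omega
          rw [hwf', hwx, Nat.dist, Nat.dist]
          omega
      · -- Case D : insert a pair of k's into x
        push_neg at hC
        have hweq : ∀ m, wv x.1 m = wv y.1 m := fun m => le_antisymm (hB m) (hC m)
        have hne2 : (∑ i ∈ Finset.range n,
            (Nat.dist (wv x.1 i) (wv y.1 i) + if sb x.1 i = sb y.1 i then 0 else 1)) ≠ 0 := hne
        obtain ⟨i, hmem, hterm⟩ := Finset.exists_ne_zero_of_sum_ne_zero hne2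
        have hin : i < n := Finset.mem_range.mp hmem
        have hsbne : sb x.1 i ≠ sb y.1 i := by
          intro hc
          rw [hweq i, Nat.dist_self, if_pos hc] at hterm
          exact hterm rfl
        have hsf : sb x.1 i = false := by
          cases hb : sb x.1 i with
          | false => rfl
          | true => exact absurd (hb.trans (hA i hb).symm) hsbne
        have hsg : sb y.1 i = true := by
          cases hb : sb y.1 i with
          | false => exact absurd (hsf.trans hb.symm) hsbne
          | true => rfl
        have hgik : fe y.1 i = k := by
          rw [sb, decide_eq_true_eq] at hsg
          exact hsg.1
        obtain ⟨hi1, hgik1, hsg1⟩ := sb_true_spec hk hCg hsg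
        have hwyi : wv y.1 i = k - 1 := by rw [wv, hgik]; omega
        have hwyi1 : wv y.1 (i+1) = k - 1 := by rw [wv, hgik1]; omega
        have hfik : fe x.1 i = k - 1 := by
          have hge : k - 1 ≤ fe x.1 i := by
            have := hweq i
            rw [hwyi, wv] at this
            omega
          rcases eq_or_lt_of_le hge with h1 | h1
          · omega
          · exfalso
            have hfk : fe x.1 i = k := by
              have := fe_le x.1 i
              omega
            obtain ⟨hi0, hprev, hstrue⟩ := sb_false_spec hk hCf hfk hsf
            have hy := sb_true_spec hk hCg (hA _ hstrue)
            rw [Nat.sub_add_cancel hi0] at hy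
            rw [hy.2.2] at hsg
            exact Bool.false_ne_true hsg
        have hfik1 : fe x.1 (i+1) = k - 1 := by
          have hge : k - 1 ≤ fe x.1 (i+1) := by
            have := hweq (i+1)
            rw [hwyi1, wv] at this
            omega
          rcases eq_or_lt_of_le hge with h1 | h1
          · omega
          · exfalso
            have hfk : fe x.1 (i+1) = k := by
              have := fe_le x.1 (i+1)
              omega
            cases hb : sb x.1 (i+1) with
            | false =>
              obtain ⟨hi0, hprev, hstrue⟩ := sb_false_spec hk hCf hfk hb
              simp only [Nat.add_sub_cancel] at hprev
              omega
            | true =>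
              have := hA _ hb
              rw [hsg1] at this
              exact Bool.false_ne_true this
        set f' : Fin n → Fin (k+1) :=
          (fun t => if (t : ℕ) = i ∨ (t : ℕ) = i + 1 then ⟨k, by omega⟩ else x.1 t) with hf'
        have hfe1 : fe f' i = k := by rw [hf', fe_ite2, if_pos ⟨Or.inl rfl, hin⟩]
        have hfe2 : fe f' (i+1) = k := by rw [hf', fe_ite2, if_pos ⟨Or.inr rfl, hi1⟩]
        have hfer : ∀ m, m ≠ i → m ≠ i + 1 → fe x.1 m = fe f' m := by
          intro m h1 h2
          rw [hf', fe_ite2, if_neg (by tauto)]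
        obtain ⟨hCf', hsf'j, hsfj0, hrest'⟩ :=
          pair_up hk hCf hi1 (by omega) (by omega) hfe1 hfe2 hfer
        have hwv : ∀ m, wv f' m = wv x.1 m := by
          intro m
          by_cases h1 : m = i
          · subst h1; rw [wv, wv, hfe1, hfik]; omega
          · by_cases h2 : m = i + 1
            · subst h2; rw [wv, wv, hfe2, hfik1]; omega
            · exact wv_congr (hfer m h1 h2).symm
        have hadj : pellAdj k x.1 f' := by
          right
          refine ⟨⟨i, hin⟩, ⟨i+1, hi1⟩, rfl, ?_, ?_, ?_, ?_, ?_⟩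
          · rw [fin_val x.1 hin]; exact hfik
          · rw [fin_val x.1 hi1]; exact hfik1
          · rw [fin_val f' hin]; exact hfe1
          · rw [fin_val f' hi1]; exact hfe2
          · intro t ht1 ht2
            simp only [hf']
            rw [if_neg]
            rintro (hc | hc)
            · exact ht1 (Fin.ext (by simpa using hc))
            · exact ht2 (Fin.ext (by simpa using hc))
        have hnefun : x.1 ≠ f' := by
          intro hc
          have : fe x.1 i = fe f' i := by rw [hc]
          omega
        refine ⟨⟨f', (valid_iff hk f').mpr hCf'⟩, ?_, ?_⟩
        · rw [kPellGraph, SimpleGraph.fromRel_adj]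
          exact ⟨fun hc => hnefun (congrArg Subtype.val hc), Or.inl hadj⟩
        · exact Dd_decrease_s hin hwv (fun m hm => (hrest' m hm).symm)
            (by rw [hsf, hsg]; simp) (by rw [hsf'j, hsg])

lemma exists_walk (hk : k ≠ 0) :
    ∀ (N : ℕ) (x y : PellVert n k), Dd x.1 y.1 ≤ N →
      ∃ p : (kPellGraph n k).Walk x y, p.length = Dd x.1 y.1 := by
  intro N
  induction N with
  | zero =>
    intro x y h
    have h0 : Dd x.1 y.1 = 0 := by omega
    have hxy : x = y := Subtype.ext (Dd_eq_zero hk (valid_Cf hk x) (valid_Cf hk y) h0)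
    subst hxy
    exact ⟨SimpleGraph.Walk.nil, by rw [h0, SimpleGraph.Walk.length_nil]⟩
  | succ N ih =>
    intro x y h
    by_cases h0 : Dd x.1 y.1 = 0
    · have hxy : x = y := Subtype.ext (Dd_eq_zero hk (valid_Cf hk x) (valid_Cf hk y) h0)
      subst hxy
      exact ⟨SimpleGraph.Walk.nil, by rw [h0, SimpleGraph.Walk.length_nil]⟩
    · obtain ⟨x', hadj, hdd⟩ := exists_adj_step hk h0
      obtain ⟨p, hp⟩ := ih x' y (by omega)
      exact ⟨SimpleGraph.Walk.cons hadj p, by rw [SimpleGraph.Walk.length_cons, hp]; omega⟩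

lemma dist_eq (hk : k ≠ 0) (x y : PellVert n k) :
    (kPellGraph n k).dist x y = Dd x.1 y.1 := by
  obtain ⟨p, hp⟩ := exists_walk hk (Dd x.1 y.1) x y le_rfl
  refine le_antisymm (hp ▸ SimpleGraph.dist_le p) ?_
  obtain ⟨q, hq⟩ := SimpleGraph.Reachable.exists_walk_length_eq_dist ⟨p⟩
  exact hq ▸ Dd_le_walk hk q

end Graph

section Median

variable {n k : ℕ}

def maj (a b c : Bool) : Bool := (a && b) || (a && c) || (b && c)

def m3 (a b c : ℕ) : ℕ := max (min a b) (max (min a c) (min b c))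

lemma bool_median : ∀ (a b c u : Bool),
    ((if a = u then 0 else 1) + (if u = b then 0 else 1) : ℕ) = (if a = b then 0 else 1) →
    ((if a = u then 0 else 1) + (if u = c then 0 else 1) : ℕ) = (if a = c then 0 else 1) →
    ((if b = u then 0 else 1) + (if u = c then 0 else 1) : ℕ) = (if b = c then 0 else 1) →
    u = maj a b c := by decide

lemma bool_between : ∀ (a b c : Bool),
    (((if a = maj a b c then 0 else 1) + (if maj a b c = b then 0 else 1) : ℕ)
      = (if a = b then 0 else 1)) ∧
    (((if a = maj a b c then 0 else 1) + (if maj a b c = c then 0 else 1) : ℕ)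
      = (if a = c then 0 else 1)) ∧
    (((if b = maj a b c then 0 else 1) + (if maj a b c = c then 0 else 1) : ℕ)
      = (if b = c then 0 else 1)) := by decide

lemma ite_triangle : ∀ (p q r : Bool),
    ((if p = r then 0 else 1) : ℕ) ≤ (if p = q then 0 else 1) + (if q = r then 0 else 1) := by
  decide

lemma nat_median {a b c u : ℕ} (h1 : Nat.dist a u + Nat.dist u b = Nat.dist a b)
    (h2 : Nat.dist a u + Nat.dist u c = Nat.dist a c)
    (h3 : Nat.dist b u + Nat.dist u c = Nat.dist b c) : u = m3 a b c := by
  simp only [Nat.dist, m3] at *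
  omega

lemma nat_between (a b c : ℕ) :
    (Nat.dist a (m3 a b c) + Nat.dist (m3 a b c) b = Nat.dist a b) ∧
    (Nat.dist a (m3 a b c) + Nat.dist (m3 a b c) c = Nat.dist a c) ∧
    (Nat.dist b (m3 a b c) + Nat.dist (m3 a b c) c = Nat.dist b c) := by
  simp only [Nat.dist, m3]
  omega

lemma Dd_split {u a b : Fin n → Fin (k+1)}
    (h1 : ∀ i, Nat.dist (wv a i) (wv u i) + Nat.dist (wv u i) (wv b i) = Nat.dist (wv a i) (wv b i))
    (h2 : ∀ i, (((if sb a i = sb u i then 0 else 1) + (if sb u i = sb b i then 0 else 1)) : ℕ)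
      = (if sb a i = sb b i then 0 else 1)) :
    Dd a u + Dd u b = Dd a b := by
  rw [Dd, Dd, Dd, ← Finset.sum_add_distrib]
  refine Finset.sum_congr rfl fun i _ => ?_
  have := h1 i
  have := h2 i
  omega

lemma Dd_pointwise {a u b : Fin n → Fin (k+1)} (h : Dd a u + Dd u b = Dd a b) :
    ∀ i, i < n →
      (Nat.dist (wv a i) (wv u i) + Nat.dist (wv u i) (wv b i) = Nat.dist (wv a i) (wv b i)) ∧
      ((((if sb a i = sb u i then 0 else 1) + (if sb u i = sb b i then 0 else 1)) : ℕ)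
        = (if sb a i = sb b i then 0 else 1)) := by
  have hle : ∀ i ∈ Finset.range n,
      (Nat.dist (wv a i) (wv b i) + (if sb a i = sb b i then 0 else 1)) ≤
      ((Nat.dist (wv a i) (wv u i) + (if sb a i = sb u i then 0 else 1)) +
       (Nat.dist (wv u i) (wv b i) + (if sb u i = sb b i then 0 else 1))) := by
    intro i _
    have t1 := Nat.dist.triangle_inequality (wv a i) (wv u i) (wv b i)
    have t2 := ite_triangle (sb a i) (sb u i) (sb b i)
    omega
  have hsum : ∑ i ∈ Finset.range n,
      (Nat.dist (wv a i) (wv b i) + (if sb a i = sb b i then 0 else 1)) =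
      ∑ i ∈ Finset.range n,
      ((Nat.dist (wv a i) (wv u i) + (if sb a i = sb u i then 0 else 1)) +
       (Nat.dist (wv u i) (wv b i) + (if sb u i = sb b i then 0 else 1))) := by
    exact h.symm.trans Finset.sum_add_distrib.symm
  have hpt := (Finset.sum_eq_sum_iff_of_le hle).mp hsum
  intro i hi
  have h1 := hpt i (Finset.mem_range.mpr hi)
  have t1 := Nat.dist.triangle_inequality (wv a i) (wv u i) (wv b i)
  have t2 := ite_triangle (sb a i) (sb u i) (sb b i)
  constructor <;> omega

lemma median_exists (hk : k ≠ 0) (x y z : PellVert n k) :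
    ∃ u : PellVert n k,
      (∀ i, wv u.1 i = m3 (wv x.1 i) (wv y.1 i) (wv z.1 i)) ∧
      (∀ i, sb u.1 i = maj (sb x.1 i) (sb y.1 i) (sb z.1 i)) := by
  have hCx := valid_Cf hk x
  have hCy := valid_Cf hk y
  have hCz := valid_Cf hk z
  set mj : ℕ → Bool := fun m => maj (sb x.1 m) (sb y.1 m) (sb z.1 m) with hmj
  set wm : ℕ → ℕ := fun m => m3 (wv x.1 m) (wv y.1 m) (wv z.1 m) with hwm
  have hwvle : ∀ (f : Fin n → Fin (k+1)) (m : ℕ), wv f m ≤ k - 1 := fun f m => min_le_right _ _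
  have hwmle : ∀ m, wm m ≤ k - 1 := by
    intro m
    have h1 := hwvle x.1 m
    have h2 := hwvle y.1 m
    have h3 := hwvle z.1 m
    rw [hwm]
    simp only [m3]
    omega
  have hmjlt : ∀ m, mj m = true → m < n := by
    intro m hm
    by_contra hc
    rw [hmj] at hm
    simp only [sb_out hk hc, maj] at hm
    simp at hm
  -- core fact about two strings with a pair at m
  have core : ∀ (f g : Fin n → Fin (k+1)), Cf f → Cf g → ∀ m, sb f m = true → sb g m = true →
      m + 1 < n ∧ sb f (m+1) = false ∧ sb g (m+1) = false ∧
      wv f m = k - 1 ∧ wv g m = k - 1 ∧ wv f (m+1) = k - 1 ∧ wv g (m+1) = k - 1 := by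
    intro f g hCf hCg m hf hg
    obtain ⟨h1, h2, h3⟩ := sb_true_spec hk hCf hf
    obtain ⟨h1', h2', h3'⟩ := sb_true_spec hk hCg hg
    have hfk : fe f m = k := by rw [sb, decide_eq_true_eq] at hf; exact hf.1
    have hgk : fe g m = k := by rw [sb, decide_eq_true_eq] at hg; exact hg.1
    refine ⟨h1, h3, h3', ?_, ?_, ?_, ?_⟩ <;> rw [wv]
    · rw [hfk]; omega
    · rw [hgk]; omega
    · rw [h2]; omega
    · rw [h2']; omega
  have hstep : ∀ m, mj m = true →
      m + 1 < n ∧ mj (m+1) = false ∧ wm m = k - 1 ∧ wm (m+1) = k - 1 := by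
    intro m hm
    have h2 : (sb x.1 m = true ∧ sb y.1 m = true) ∨ (sb x.1 m = true ∧ sb z.1 m = true) ∨
        (sb y.1 m = true ∧ sb z.1 m = true) := by
      rw [hmj] at hm
      cases hx : sb x.1 m <;> cases hy : sb y.1 m <;> cases hz : sb z.1 m <;>
        simp_all [maj]
    rcases h2 with ⟨ha, hb⟩ | ⟨ha, hb⟩ | ⟨ha, hb⟩
    · obtain ⟨c1, c2, c3, c4, c5, c6, c7⟩ := core x.1 y.1 hCx hCy m ha hb
      have hz1 := hwvle z.1 m
      have hz2 := hwvle z.1 (m+1)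
      refine ⟨c1, ?_, ?_, ?_⟩
      · rw [hmj]; simp [maj, c2, c3]
      · rw [hwm]; simp only [m3]; omega
      · rw [hwm]; simp only [m3]; omega
    · obtain ⟨c1, c2, c3, c4, c5, c6, c7⟩ := core x.1 z.1 hCx hCz m ha hb
      have hz1 := hwvle y.1 m
      have hz2 := hwvle y.1 (m+1)
      refine ⟨c1, ?_, ?_, ?_⟩
      · rw [hmj]; simp [maj, c2, c3]
      · rw [hwm]; simp only [m3]; omega
      · rw [hwm]; simp only [m3]; omega
    · obtain ⟨c1, c2, c3, c4, c5, c6, c7⟩ := core y.1 z.1 hCy hCz m ha hb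
      have hz1 := hwvle x.1 m
      have hz2 := hwvle x.1 (m+1)
      refine ⟨c1, ?_, ?_, ?_⟩
      · rw [hmj]; simp [maj, c2, c3]
      · rw [hwm]; simp only [m3]; omega
      · rw [hwm]; simp only [m3]; omega
  set B : ℕ → Bool := fun m => mj m || (decide (0 < m) && mj (m-1)) with hB
  set mf : Fin n → Fin (k+1) := fun t =>
    if B (t : ℕ) = true then ⟨k, by omega⟩ else ⟨wm (t : ℕ), by have := hwmle (t : ℕ); omega⟩
    with hmf
  have femf : ∀ m, m < n → fe mf m = if B m = true then k else wm m := by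
    intro m hm
    have hrfl : mf ⟨m, hm⟩ = if B m = true then (⟨k, by omega⟩ : Fin (k+1))
        else ⟨wm m, by have := hwmle m; omega⟩ := rfl
    rw [fe, dif_pos hm, hrfl, apply_ite (Fin.val : Fin (k+1) → ℕ)]
  have hfemk : ∀ m, fe mf m = k ↔ (m < n ∧ B m = true) := by
    intro m
    by_cases hm : m < n
    · rw [femf m hm]
      by_cases hb : B m = true
      · simp [hb, hm]
      · have := hwmle m
        simp [hb, hm]
        omega
    · rw [fe_out hm]
      constructor
      · intro hc; exact absurd hc.symm hk
      · intro hc; exact absurd hc.1 hm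
  have hBlt : ∀ m, B m = true → m < n := by
    intro m hm
    rw [hB] at hm
    simp only [Bool.or_eq_true, Bool.and_eq_true, decide_eq_true_eq] at hm
    rcases hm with hm | ⟨hm0, hm⟩
    · exact hmjlt m hm
    · have := (hstep (m-1) hm).1
      omega
  have hpar : ∀ m, (Odd (cf mf m) ↔ (0 < m ∧ mj (m-1) = true)) := by
    intro m
    induction m with
    | zero => simp [cf]
    | succ m ih =>
      rw [cf_succ]
      by_cases h1 : mj m = true
      · have hmlt : m < n := hmjlt m h1
        have hprev : ¬ (0 < m ∧ mj (m-1) = true) := by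
          rintro ⟨hm0, hp⟩
          have h2 := (hstep (m-1) hp).2.1
          rw [Nat.sub_add_cancel hm0] at h2
          rw [h1] at h2
          simp at h2
        have hfek : fe mf m = k := by
          rw [hfemk]
          exact ⟨hmlt, by rw [hB]; simp [h1]⟩
        have h0 : cf mf m % 2 = 0 := by
          rcases Nat.mod_two_eq_zero_or_one (cf mf m) with h | h
          · exact h
          · exact absurd (ih.mp (Nat.odd_iff.mpr h)) hprev
        rw [if_pos hfek, Nat.odd_iff]
        constructor
        · intro _
          exact ⟨by omega, by simpa using h1⟩
        · intro _
          omega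
      · by_cases h2 : 0 < m ∧ mj (m-1) = true
        · have hmlt : m < n := by
            have := (hstep (m-1) h2.2).1
            omega
          have hfek : fe mf m = k := by
            rw [hfemk]
            refine ⟨hmlt, by rw [hB]; simp [h2.1, h2.2]⟩
          have hodd : cf mf m % 2 = 1 := Nat.odd_iff.mp (ih.mpr h2)
          rw [if_pos hfek, Nat.odd_iff]
          constructor
          · intro hc
            omega
          · rintro ⟨-, hmjm⟩
            exact absurd hmjm h1
        · have hfek : fe mf m ≠ k := by
            intro hc
            rw [hfemk] at hc
            obtain ⟨hmn, hb⟩ := hc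
            rw [hB] at hb
            simp only [Bool.or_eq_true, Bool.and_eq_true, decide_eq_true_eq] at hb
            rcases hb with hb | hb
            · exact h1 hb
            · exact h2 hb
          rw [if_neg hfek, Nat.add_zero, ih]
          constructor
          · intro hp
            exact absurd hp h2
          · rintro ⟨-, hmjm⟩
            exact absurd (show mj m = true by simpa using hmjm) h1
  have hsbm : ∀ m, sb mf m = mj m := by
    intro m
    cases hm : mj m with
    | true =>
      have hfek : fe mf m = k := by
        rw [hfemk]
        exact ⟨hmjlt m hm, by rw [hB]; simp [hm]⟩
      have hodd : Odd (cf mf (m+1)) := by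
        rw [hpar]
        exact ⟨by omega, by simpa using hm⟩
      rw [sb, decide_eq_true_eq]
      exact ⟨hfek, hodd⟩
    | false =>
      rw [sb, decide_eq_false_iff_not]
      rintro ⟨hfek, hodd⟩
      rw [hpar] at hodd
      obtain ⟨hm0, hmj'⟩ := hodd
      simp only [Nat.add_sub_cancel] at hmj'
      rw [hm] at hmj'
      exact Bool.false_ne_true hmj'
  have hCmf : Cf mf := by
    intro m hm ho
    rcases Nat.eq_zero_or_pos m with rfl | hm0
    · simp [cf] at ho
    · have hmj' : mj (m-1) = true := ((hpar m).mp ho).2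
      have hlt : m < n := by
        have := (hstep (m-1) hmj').1
        omega
      refine ⟨hlt, ?_⟩
      rw [hfemk]
      exact ⟨hlt, by rw [hB]; simp [hm0, hmj']⟩
  have hwvm : ∀ m, wv mf m = wm m := by
    intro m
    by_cases hm : m < n
    · by_cases hb : B m = true
      · have hfek : fe mf m = k := by rw [hfemk]; exact ⟨hm, hb⟩
        have hwmk : wm m = k - 1 := by
          rw [hB] at hb
          simp only [Bool.or_eq_true, Bool.and_eq_true, decide_eq_true_eq] at hb
          rcases hb with hb | ⟨hb0, hb⟩
          · exact (hstep m hb).2.2.1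
          · have h4 := (hstep (m-1) hb).2.2.2
            rw [Nat.sub_add_cancel hb0] at h4
            exact h4
        rw [wv, hfek, hwmk]
        omega
      · rw [wv, femf m hm, if_neg hb]
        have := hwmle m
        omega
    · rw [wv, fe_out hm, hwm]
      have e1 : wv x.1 m = 0 := by rw [wv, fe_out hm]; omega
      have e2 : wv y.1 m = 0 := by rw [wv, fe_out hm]; omega
      have e3 : wv z.1 m = 0 := by rw [wv, fe_out hm]; omega
      simp only [m3, e1, e2, e3]
      omega
  exact ⟨⟨mf, (valid_iff hk mf).mpr hCmf⟩, hwvm, hsbm⟩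

end Median
end KPell

theorem kPellGraph_median (n k : ℕ) (hn : 1 ≤ n) (hk : 2 ≤ k) (x y z : PellVert n k) :
    ∃! u : PellVert n k,
      (kPellGraph n k).dist x u + (kPellGraph n k).dist u y = (kPellGraph n k).dist x y ∧
      (kPellGraph n k).dist x u + (kPellGraph n k).dist u z = (kPellGraph n k).dist x z ∧
      (kPellGraph n k).dist y u + (kPellGraph n k).dist u z = (kPellGraph n k).dist y z := by
  have hk0 : k ≠ 0 := by omega
  obtain ⟨u, huw, hus⟩ := KPell.median_exists hk0 x y z
  refine ⟨u, ⟨?_, ?_, ?_⟩, ?_⟩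
  · simp only [KPell.dist_eq hk0]
    exact KPell.Dd_split
      (fun i => by rw [huw i]; exact (KPell.nat_between _ _ _).1)
      (fun i => by rw [hus i]; exact (KPell.bool_between _ _ _).1)
  · simp only [KPell.dist_eq hk0]
    exact KPell.Dd_split
      (fun i => by rw [huw i]; exact (KPell.nat_between _ _ _).2.1)
      (fun i => by rw [hus i]; exact (KPell.bool_between _ _ _).2.1)
  · simp only [KPell.dist_eq hk0]
    exact KPell.Dd_split
      (fun i => by rw [huw i]; exact (KPell.nat_between _ _ _).2.2)
      (fun i => by rw [hus i]; exact (KPell.bool_between _ _ _).2.2)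
  · rintro v ⟨h1, h2, h3⟩
    simp only [KPell.dist_eq hk0] at h1 h2 h3
    have p1 := KPell.Dd_pointwise h1
    have p2 := KPell.Dd_pointwise h2
    have p3 := KPell.Dd_pointwise h3
    apply Subtype.ext
    refine KPell.eq_of_wv_sb hk0 (KPell.valid_Cf hk0 v) (KPell.valid_Cf hk0 u)
      (fun i => ?_) (fun i => ?_)
    · by_cases hi : i < n
      · rw [huw i]
        exact KPell.nat_median (p1 i hi).1 (p2 i hi).1 (p3 i hi).1
      · rw [KPell.wv, KPell.wv, KPell.fe_out hi, KPell.fe_out hi]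
    · by_cases hi : i < n
      · rw [hus i]
        exact KPell.bool_median _ _ _ _ (p1 i hi).2 (p2 i hi).2 (p3 i hi).2
      · rw [KPell.sb_out hk0 hi, KPell.sb_out hk0 hi]
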